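/- Let X be a Peano continuum having a free arc and let A be a free arc of X with endpoints a and b. Suppose x, y ∈ A satisfy a ≺ x ≺ y ≺ b with respect to a natural ordering ≺ on A. Let ε = min{diam([a,x]_A), diam([y,b]_A)}, and let δ = δ(ε) ∈ (0, ε/2] be such that any two points of X at positive distance at most δ are joined by an arc of diameter less than ε. Then d([x,y]_A, X ∖ (a,b)_A) > δ. -/
import Mathlib


open Set Metric Topology

/-- The whole space `X` is an arc, i.e. homeomorphic to `[0,1]`. -/
def SpaceIsArc (X : Type*) [TopologicalSpace X] : Prop :=
  Nonempty (X ≃ₜ Set.Icc (0:ℝ) 1)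

/-- The whole space `X` is a circle, i.e. homeomorphic to the unit circle in `ℂ`. -/
def SpaceIsCircle (X : Type*) [TopologicalSpace X] : Prop :=
  Nonempty (X ≃ₜ Metric.sphere (0:ℂ) 1)

/-- A subset `A` is an arc: with the subspace topology it is homeomorphic to `[0,1]`. -/
def IsArc {X : Type*} [TopologicalSpace X] (A : Set X) : Prop :=
  Nonempty (A ≃ₜ Set.Icc (0:ℝ) 1)

/-- A subset `A` is a circle: with the subspace topology it is homeomorphic to `S¹`. -/
def IsCircleSet {X : Type*} [TopologicalSpace X] (A : Set X) : Prop :=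
  Nonempty (A ≃ₜ Metric.sphere (0:ℂ) 1)

/-- `A` is an arc with endpoints `a` and `b`: it is the image of a continuous
injective parametrization of `[0,1]` with `γ 0 = a` and `γ 1 = b`. -/
def IsArcEnds {X : Type*} [TopologicalSpace X] (A : Set X) (a b : X) : Prop :=
  ∃ γ : ℝ → X, ContinuousOn γ (Set.Icc 0 1) ∧ Set.InjOn γ (Set.Icc 0 1) ∧
    γ '' Set.Icc 0 1 = A ∧ γ 0 = a ∧ γ 1 = b

/-- A free open interval: an open subset homeomorphic to `(0,1)`. -/
def IsFreeOpenInterval {X : Type*} [TopologicalSpace X] (J : Set X) : Prop :=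
  IsOpen J ∧ Nonempty (J ≃ₜ Set.Ioo (0:ℝ) 1)

/-- A free arc: the closure of a free open interval, homeomorphic to `[0,1]`. -/
def IsFreeArc {X : Type*} [TopologicalSpace X] (A : Set X) : Prop :=
  ∃ J : Set X, IsFreeOpenInterval J ∧ A = closure J ∧ IsArc A

/-- A maximal free open interval: no free open interval properly contains it. -/
def IsMaxFreeOpenInterval {X : Type*} [TopologicalSpace X] (J : Set X) : Prop :=
  IsFreeOpenInterval J ∧ ∀ K : Set X, IsFreeOpenInterval K → J ⊆ K → J = K

/-- `x` is an endpoint of the space `X`: every open set containing `x` contains an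
open neighborhood of `x` whose boundary is a single point. -/
def IsEndpointOf (X : Type*) [TopologicalSpace X] (x : X) : Prop :=
  ∀ U : Set X, IsOpen U → x ∈ U → ∃ V : Set X, IsOpen V ∧ x ∈ V ∧ V ⊆ U ∧
    ∃ y : X, frontier V = {y}

/-- A maximal free open interval of Type I: its closure is an arc `J ∪ {a,b}` with
`a, b ∉ J` and at least one of `a, b` an endpoint of `X`. -/
def IsTypeI {X : Type*} [TopologicalSpace X] (J : Set X) : Prop :=
  IsMaxFreeOpenInterval J ∧ ∃ a b : X, a ≠ b ∧ a ∉ J ∧ b ∉ J ∧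
    closure J = J ∪ {a, b} ∧ IsArcEnds (closure J) a b ∧
    (IsEndpointOf X a ∨ IsEndpointOf X b)

/-- The model simple triod in the complex plane: three unit segments from the
origin in directions `π/3`, `π`, `5π/3`. -/
noncomputable def triodModel : Set ℂ :=
  ⋃ θ ∈ ({Real.pi / 3, Real.pi, 5 * Real.pi / 3} : Set ℝ),
    (fun r : ℝ => (r : ℂ) * Complex.exp (θ * Complex.I)) '' Set.Icc (0:ℝ) 1

/-- `A` is a simple triod. -/
def IsSimpleTriod {X : Type*} [TopologicalSpace X] (A : Set X) : Prop :=
  Nonempty (A ≃ₜ triodModel)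

/-- `U` contains no simple triod. -/
def ContainsNoTriod {X : Type*} [TopologicalSpace X] (U : Set X) : Prop :=
  ∀ A : Set X, A ⊆ U → ¬ IsSimpleTriod A

/-- The distance between two subsets of a metric space:
`d(S,T) = inf { dist s t | s ∈ S, t ∈ T }`. -/
noncomputable def setDist {X : Type*} [MetricSpace X] (S T : Set X) : ℝ :=
  sInf (Set.image2 dist S T)

/-- if `A = γ '' [0,1]` is a free arc with endpoints `a = γ 0`,
`b = γ 1` and `a ≺ x = γ s ≺ y = γ t ≺ b` in a natural ordering, with
`ε = min (diam [a,x]) (diam [y,b])` and `δ = δ(ε)` as in Lemma 2.1, then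
`d([x,y]_A, X ∖ (a,b)_A) > δ`. -/
theorem stmt_2 (X : Type*) [MetricSpace X] [CompactSpace X] [ConnectedSpace X]
    [LocallyConnectedSpace X]
    (γ : ℝ → X) (hγc : ContinuousOn γ (Set.Icc 0 1))
    (hγi : Set.InjOn γ (Set.Icc 0 1))
    (hA : IsFreeArc (γ '' Set.Icc 0 1))
    (s t : ℝ) (h0s : 0 < s) (hst : s < t) (ht1 : t < 1)
    (ε δ : ℝ)
    (hε : ε = min (Metric.diam (γ '' Set.Icc 0 s)) (Metric.diam (γ '' Set.Icc t 1)))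
    (hδ0 : 0 < δ) (hδε : δ ≤ ε / 2)
    (hδ : ∀ p q : X, 0 < dist p q → dist p q ≤ δ →
      ∃ B : Set X, IsArcEnds B p q ∧ Metric.diam B < ε) :
    δ < setDist (γ '' Set.Icc s t) (Set.univ \ γ '' Set.Ioo 0 1) := by
  classical
  have hs1 : s < 1 := hst.trans ht1
  have h0t : 0 < t := h0s.trans hst
  have hsub : ∀ {u : ℝ}, u ∈ Icc s t → u ∈ Icc (0:ℝ) 1 :=
    fun hu => ⟨h0s.le.trans hu.1, hu.2.trans ht1.le⟩
  have hcomp : ∀ K : Set ℝ, IsCompact K → K ⊆ Icc 0 1 → IsCompact (γ '' K) :=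
    fun K hK hKs => hK.image_of_continuousOn (hγc.mono hKs)
  have hXb : ∀ T : Set X, Bornology.IsBounded T :=
    fun T => isCompact_univ.isBounded.subset (subset_univ T)
  obtain ⟨J, ⟨hJopen, hJIoo⟩, hAcl, -⟩ := hA
  have hJA : J ⊆ γ '' Icc 0 1 := hAcl ▸ subset_closure
  -- J is preconnected
  have hJconn : IsPreconnected J := by
    obtain ⟨h⟩ := hJIoo
    have hps : PreconnectedSpace (Ioo (0:ℝ) 1) :=
      Subtype.preconnectedSpace isPreconnected_Ioo
    have h1 : IsPreconnected (univ : Set (Ioo (0:ℝ) 1)) := isPreconnected_univ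
    have h2 := h1.image (Subtype.val ∘ h.symm)
      ((continuous_subtype_val.comp h.symm.continuous).continuousOn)
    rwa [image_univ, range_comp, h.symm.surjective.range_eq, image_univ,
      Subtype.range_coe] at h2
  -- the parameter set of J
  set S : Set ℝ := Icc 0 1 ∩ γ ⁻¹' J with hSdef
  have hSimg : γ '' S = J := by
    apply Subset.antisymm
    · rintro z ⟨r, ⟨-, hr⟩, rfl⟩; exact hr
    · intro z hz
      obtain ⟨r, hr, rfl⟩ := hJA hz
      exact ⟨r, ⟨hr, hz⟩, rfl⟩
  -- S is order-connected
  have hSord : ∀ p ∈ S, ∀ q ∈ S, ∀ r : ℝ, p ≤ r → r ≤ q → r ∈ S := by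
    rintro p ⟨hpI, hpJ⟩ q ⟨hqI, hqJ⟩ r hpr hrq
    have hrI : r ∈ Icc (0:ℝ) 1 := ⟨hpI.1.trans hpr, hrq.trans hqI.2⟩
    refine ⟨hrI, ?_⟩
    by_contra hr
    have hC1 : IsCompact (γ '' Icc 0 r) :=
      hcomp _ isCompact_Icc (Icc_subset_Icc le_rfl hrI.2)
    have hC2 : IsCompact (γ '' Icc r 1) :=
      hcomp _ isCompact_Icc (Icc_subset_Icc hrI.1 le_rfl)
    have hne1 : γ p ∈ J ∩ (γ '' Icc r 1)ᶜ := by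
      refine ⟨hpJ, fun hmem => ?_⟩
      obtain ⟨m, hm, hme⟩ := hmem
      have hpm : p = m := hγi hpI ⟨hrI.1.trans hm.1, hm.2⟩ hme.symm
      have hpe : p = r := le_antisymm hpr (hpm ▸ hm.1)
      exact hr (hpe ▸ hpJ)
    have hne2 : γ q ∈ J ∩ (γ '' Icc 0 r)ᶜ := by
      refine ⟨hqJ, fun hmem => ?_⟩
      obtain ⟨m, hm, hme⟩ := hmem
      have hqm : q = m := hγi hqI ⟨hm.1, hm.2.trans hrI.2⟩ hme.symm
      have hqe : q = r := le_antisymm (hqm ▸ hm.2) hrq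
      exact hr (hqe ▸ hqJ)
    have hcov : J ⊆ (γ '' Icc r 1)ᶜ ∪ (γ '' Icc 0 r)ᶜ := by
      intro z hz
      by_contra hzc
      simp only [mem_union, mem_compl_iff, not_or, not_not] at hzc
      obtain ⟨m1, hm1, hem1⟩ := hzc.1
      obtain ⟨m2, hm2, hem2⟩ := hzc.2
      have heq : m1 = m2 := hγi ⟨hrI.1.trans hm1.1, hm1.2⟩
        ⟨hm2.1, hm2.2.trans hrI.2⟩ (hem1.trans hem2.symm)
      have hm1r : m1 = r := le_antisymm (heq ▸ hm2.2) hm1.1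
      rw [← hem1, hm1r] at hz
      exact hr hz
    obtain ⟨z, hzJ, hz1, hz2⟩ := hJconn _ _ hC2.isClosed.isOpen_compl
      hC1.isClosed.isOpen_compl hcov ⟨γ p, hne1⟩ ⟨γ q, hne2⟩
    obtain ⟨m, hm, rfl⟩ := hJA hzJ
    rcases le_total m r with h | h
    · exact hz2 ⟨m, ⟨hm.1, h⟩, rfl⟩
    · exact hz1 ⟨m, ⟨h, hm.2⟩, rfl⟩
  -- S contains Ioo 0 1
  have hIooS : Ioo (0:ℝ) 1 ⊆ S := by
    intro r hr
    have h0A : γ 0 ∈ closure J := hAcl ▸ mem_image_of_mem γ (left_mem_Icc.mpr zero_le_one)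
    have h1A : γ 1 ∈ closure J := hAcl ▸ mem_image_of_mem γ (right_mem_Icc.mpr zero_le_one)
    have hC2 : IsCompact (γ '' Icc r 1) :=
      hcomp _ isCompact_Icc (Icc_subset_Icc hr.1.le le_rfl)
    have hC1 : IsCompact (γ '' Icc 0 r) :=
      hcomp _ isCompact_Icc (Icc_subset_Icc le_rfl hr.2.le)
    have h0O : γ 0 ∈ (γ '' Icc r 1)ᶜ := by
      rintro ⟨m, hm, hme⟩
      have h0m : (0:ℝ) = m :=
        hγi (left_mem_Icc.mpr zero_le_one) ⟨hr.1.le.trans hm.1, hm.2⟩ hme.symm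
      exact absurd (h0m ▸ hm.1) (not_le.mpr hr.1)
    have h1O : γ 1 ∈ (γ '' Icc 0 r)ᶜ := by
      rintro ⟨m, hm, hme⟩
      have h1m : (1:ℝ) = m :=
        hγi (right_mem_Icc.mpr zero_le_one) ⟨hm.1, hm.2.trans hr.2.le⟩ hme.symm
      exact absurd (h1m ▸ hm.2) (not_le.mpr hr.2)
    obtain ⟨z1, hz1O, hz1J⟩ := _root_.mem_closure_iff.mp h0A _ hC2.isClosed.isOpen_compl h0O
    obtain ⟨z2, hz2O, hz2J⟩ := _root_.mem_closure_iff.mp h1A _ hC1.isClosed.isOpen_compl h1O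
    rw [← hSimg] at hz1J hz2J
    obtain ⟨p, hpS, rfl⟩ := hz1J
    obtain ⟨q, hqS, rfl⟩ := hz2J
    have hpr : p ≤ r := by
      by_contra hc
      exact hz1O ⟨p, ⟨(not_le.mp hc).le, hpS.1.2⟩, rfl⟩
    have hrq : r ≤ q := by
      by_contra hc
      exact hz2O ⟨q, ⟨hqS.1.1, (not_le.mp hc).le⟩, rfl⟩
    exact hSord p hpS q hqS r hpr hrq
  -- γ '' Ioo 0 1 is open
  have hVJ : γ '' Ioo 0 1 = J \ {γ 0, γ 1} := by
    apply Subset.antisymm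
    · rintro z ⟨r, hr, rfl⟩
      refine ⟨(hIooS hr).2, ?_⟩
      simp only [mem_insert_iff, mem_singleton_iff, not_or]
      have hrI : r ∈ Icc (0:ℝ) 1 := ⟨hr.1.le, hr.2.le⟩
      constructor
      · intro he
        exact absurd (hγi hrI (left_mem_Icc.mpr zero_le_one) he) hr.1.ne'
      · intro he
        exact absurd (hγi hrI (right_mem_Icc.mpr zero_le_one) he) hr.2.ne
    · rintro z ⟨hzJ, hz01⟩
      rw [← hSimg] at hzJ
      obtain ⟨p, hpS, rfl⟩ := hzJ
      simp only [mem_insert_iff, mem_singleton_iff, not_or] at hz01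
      have hp0 : p ≠ 0 := fun h => hz01.1 (by rw [h])
      have hp1 : p ≠ 1 := fun h => hz01.2 (by rw [h])
      exact ⟨p, ⟨lt_of_le_of_ne hpS.1.1 (Ne.symm hp0), lt_of_le_of_ne hpS.1.2 hp1⟩, rfl⟩
  have hVopen : IsOpen (γ '' Ioo 0 1) := by
    rw [hVJ]
    exact hJopen.sdiff (Set.toFinite _).isClosed
  -- the disconnection claim
  have hClaim : ∀ v w : ℝ, 0 < v → v ≤ s → t ≤ w → w < 1 →
      ∀ B : Set X, IsPreconnected B → ∀ u : ℝ, u ∈ Icc s t → γ u ∈ B →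
      ∀ q : X, q ∈ B → q ∉ γ '' Ioo 0 1 → γ v ∈ B ∨ γ w ∈ B := by
    intro v w hv0 hvs htw hw1 B hB u hu huB q hqB hqV
    by_contra hc
    push_neg at hc
    obtain ⟨hvB, hwB⟩ := hc
    have hvwsub : Icc v w ⊆ Ioo (0:ℝ) 1 :=
      fun m hm => ⟨hv0.trans_le hm.1, lt_of_le_of_lt hm.2 hw1⟩
    have hvwI : Icc v w ⊆ Icc (0:ℝ) 1 := fun m hm => ⟨(hvwsub hm).1.le, (hvwsub hm).2.le⟩
    have huI : u ∈ Icc (0:ℝ) 1 := hsub hu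
    have hunionI : Icc 0 v ∪ Icc w 1 ⊆ Icc (0:ℝ) 1 := by
      rintro m (hm | hm)
      · exact ⟨hm.1, hm.2.trans (hvwI ⟨le_rfl, (hvs.trans hst.le).trans htw⟩).2⟩
      · exact ⟨(hvwI ⟨(hvs.trans hst.le).trans htw, le_rfl⟩).1.trans hm.1, hm.2⟩
    have hCu : IsCompact (γ '' (Icc 0 v ∪ Icc w 1)) :=
      hcomp _ (isCompact_Icc.union isCompact_Icc) hunionI
    have hCm : IsCompact (γ '' Icc v w) := hcomp _ isCompact_Icc hvwI
    set U1 : Set X := γ '' Ioo 0 1 ∩ (γ '' (Icc 0 v ∪ Icc w 1))ᶜ with hU1def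
    set U2 : Set X := (γ '' Icc v w)ᶜ with hU2def
    have hU1open : IsOpen U1 := hVopen.inter hCu.isClosed.isOpen_compl
    have hU2open : IsOpen U2 := hCm.isClosed.isOpen_compl
    have huU1 : γ u ∈ U1 := by
      constructor
      · exact ⟨u, ⟨h0s.trans_le hu.1, lt_of_le_of_lt hu.2 ht1⟩, rfl⟩
      · rintro ⟨m, hm, hme⟩
        have hum : u = m := hγi huI (hunionI hm) hme.symm
        rcases hm with hm | hm
        · have : u = v := le_antisymm (hum ▸ hm.2) (hvs.trans hu.1)
          exact hvB (this ▸ huB)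
        · have : u = w := le_antisymm (hu.2.trans htw) (hum ▸ hm.1)
          exact hwB (this ▸ huB)
    have hqU2 : q ∈ U2 := by
      intro hmem
      obtain ⟨m, hm, hme⟩ := hmem
      exact hqV ⟨m, hvwsub hm, hme⟩
    have hcov : B ⊆ U1 ∪ U2 := by
      intro z hz
      by_cases hzm : z ∈ γ '' Icc v w
      · left
        obtain ⟨m, hm, rfl⟩ := hzm
        constructor
        · exact ⟨m, hvwsub hm, rfl⟩
        · rintro ⟨m', hm', hme⟩
          have hmm : m = m' := hγi (hvwI hm) (hunionI hm') hme.symm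
          rcases hm' with hm' | hm'
          · have : m = v := le_antisymm (hmm ▸ hm'.2) hm.1
            exact hvB (this ▸ hz)
          · have : m = w := le_antisymm hm.2 (hmm ▸ hm'.1)
            exact hwB (this ▸ hz)
      · right; exact hzm
    obtain ⟨z, hzB, hz1, hz2⟩ := hB _ _ hU1open hU2open hcov ⟨γ u, huB, huU1⟩ ⟨q, hqB, hqU2⟩
    obtain ⟨m, hm, rfl⟩ := hz1.1
    have hmv : v ≤ m := by
      by_contra hcm
      exact hz1.2 ⟨m, Or.inl ⟨hm.1.le, (not_le.mp hcm).le⟩, rfl⟩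
    have hmw : m ≤ w := by
      by_contra hcm
      exact hz1.2 ⟨m, Or.inr ⟨(not_le.mp hcm).le, hm.2.le⟩, rfl⟩
    exact hz2 ⟨m, ⟨hmv, hmw⟩, rfl⟩
  -- the key pairwise bound
  have hpair : ∀ p : X, p ∈ γ '' Icc s t → ∀ q : X, q ∉ γ '' Ioo 0 1 → δ < dist p q := by
    rintro p ⟨u, hu, rfl⟩ q hqV
    by_contra hcon
    push_neg at hcon
    have hpV : γ u ∈ γ '' Ioo 0 1 :=
      ⟨u, ⟨h0s.trans_le hu.1, lt_of_le_of_lt hu.2 ht1⟩, rfl⟩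
    have hpq : γ u ≠ q := fun h => hqV (h ▸ hpV)
    have hpos : 0 < dist (γ u) q := dist_pos.mpr hpq
    obtain ⟨B, ⟨β, hβc, hβi, hβim, hβ0, hβ1⟩, hBd⟩ := hδ (γ u) q hpos hcon
    have hBconn : IsPreconnected B := hβim ▸ isPreconnected_Icc.image β hβc
    have hpB : γ u ∈ B := hβim ▸ (hβ0 ▸ ⟨0, left_mem_Icc.mpr zero_le_one, rfl⟩)
    have hqB : q ∈ B := hβim ▸ (hβ1 ▸ ⟨1, right_mem_Icc.mpr zero_le_one, rfl⟩)
    have hBb : Bornology.IsBounded B := hXb B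
    by_cases hleft : ∀ v ∈ Ioc (0:ℝ) s, γ v ∈ B
    · -- B contains γ '' Ioc 0 s, so diam B ≥ ε
      have hBsub : γ '' Ioc 0 s ⊆ B := by rintro z ⟨v, hv, rfl⟩; exact hleft v hv
      have h1 : γ '' Icc 0 s ⊆ closure (γ '' Ioc 0 s) := by
        rintro z ⟨m, hm, rfl⟩
        rcases eq_or_lt_of_le hm.1 with h | h
        · have hw : ContinuousWithinAt γ (Ioc 0 s) 0 :=
            (hγc.continuousWithinAt (left_mem_Icc.mpr zero_le_one)).mono
              (fun x hx => ⟨hx.1.le, hx.2.trans hs1.le⟩)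
          have h0c : (0:ℝ) ∈ closure (Ioc 0 s) := by
            rw [closure_Ioc h0s.ne]
            exact left_mem_Icc.mpr h0s.le
          rw [← h]
          exact hw.mem_closure_image h0c
        · exact subset_closure ⟨m, ⟨h, hm.2⟩, rfl⟩
      have hd1 : Metric.diam (γ '' Icc 0 s) ≤ Metric.diam B := by
        calc Metric.diam (γ '' Icc 0 s)
            ≤ Metric.diam (closure (γ '' Ioc 0 s)) := Metric.diam_mono h1 (hXb _)
          _ = Metric.diam (γ '' Ioc 0 s) := Metric.diam_closure _
          _ ≤ Metric.diam B := Metric.diam_mono hBsub hBb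
      have hεd : ε ≤ Metric.diam (γ '' Icc 0 s) := hε ▸ min_le_left _ _
      linarith
    · by_cases hright : ∀ w ∈ Ico t 1, γ w ∈ B
      · have hBsub : γ '' Ico t 1 ⊆ B := by rintro z ⟨w, hw, rfl⟩; exact hright w hw
        have h1 : γ '' Icc t 1 ⊆ closure (γ '' Ico t 1) := by
          rintro z ⟨m, hm, rfl⟩
          rcases eq_or_lt_of_le hm.2 with h | h
          · have hw : ContinuousWithinAt γ (Ico t 1) 1 :=
              (hγc.continuousWithinAt (right_mem_Icc.mpr zero_le_one)).mono
                (fun x hx => ⟨h0t.le.trans hx.1, hx.2.le⟩)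
            have h1c : (1:ℝ) ∈ closure (Ico t 1) := by
              rw [closure_Ico ht1.ne]
              exact right_mem_Icc.mpr ht1.le
            rw [h]
            exact hw.mem_closure_image h1c
          · exact subset_closure ⟨m, ⟨hm.1, h⟩, rfl⟩
        have hd1 : Metric.diam (γ '' Icc t 1) ≤ Metric.diam B := by
          calc Metric.diam (γ '' Icc t 1)
              ≤ Metric.diam (closure (γ '' Ico t 1)) := Metric.diam_mono h1 (hXb _)
            _ = Metric.diam (γ '' Ico t 1) := Metric.diam_closure _
            _ ≤ Metric.diam B := Metric.diam_mono hBsub hBb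
        have hεd : ε ≤ Metric.diam (γ '' Icc t 1) := hε ▸ min_le_right _ _
        linarith
      · push_neg at hleft hright
        obtain ⟨v0, hv0, hv0B⟩ := hleft
        obtain ⟨w0, hw0, hw0B⟩ := hright
        rcases hClaim v0 w0 hv0.1 hv0.2 hw0.1 hw0.2 B hBconn u hu hpB q hqB hqV with h | h
        · exact hv0B h
        · exact hw0B h
  -- conclude via compactness of the distance set
  have hKc : IsCompact (γ '' Icc s t) := hcomp _ isCompact_Icc (fun u hu => hsub hu)
  have hCc : IsCompact (univ \ γ '' Ioo 0 1) :=
    (isClosed_univ.sdiff hVopen).isCompact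
  have h0notV : γ 0 ∉ γ '' Ioo 0 1 := by
    rintro ⟨m, hm, hme⟩
    have h0m : (0:ℝ) = m := hγi (left_mem_Icc.mpr zero_le_one) ⟨hm.1.le, hm.2.le⟩ hme.symm
    rw [← h0m] at hm
    exact lt_irrefl 0 hm.1
  have hne : (Set.image2 dist (γ '' Icc s t) (univ \ γ '' Ioo 0 1)).Nonempty :=
    ⟨_, Set.mem_image2_of_mem (mem_image_of_mem γ ⟨le_rfl, hst.le⟩) ⟨mem_univ _, h0notV⟩⟩
  have himgc : IsCompact (Set.image2 dist (γ '' Icc s t) (univ \ γ '' Ioo 0 1)) := by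
    rw [← Set.image_prod]
    exact (hKc.prod hCc).image continuous_dist
  have hmem := himgc.sInf_mem hne
  rw [setDist]
  obtain ⟨p, hp, q, hq, heq⟩ := hmem
  rw [← heq]
  exact hpair p hp q hq.2
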